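/- Let ε, ρ > 0 and ℓ ≥ 16, let G = (V,E) be a graph, let J ⊆ V be a nonempty set such that G[J] has fewer than (ε/(ℓρ²))·|J|² edges, let D ⊆ V, and let r, M > 0 be reals such that MRR_G(J,D) ≤ r·M/|J|. Then for every real d ≥ ε·r·M/(√ℓ·ρ²), the number of vertices v ∈ J that have more than d neighbours in D is at most 2·ε·r·M·|J|/(d·ℓ·ρ²). -/

import Mathlib

open Finset

variable {V : Type*}

/-- Number of edges of `G` with both endpoints in `S` (i.e. edges of the induced subgraph `G[S]`). -/
noncomputable def edgesIn (G : SimpleGraph V) (S : Finset V) : ℕ :=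
  {e ∈ G.edgeSet | ∀ v ∈ e, v ∈ S}.ncard

/-- Number of edges of `G` with one endpoint in `S` and one endpoint in `T`. -/
noncomputable def edgesBetween (G : SimpleGraph V) (S T : Finset V) : ℕ :=
  {e : Sym2 V | e ∈ G.edgeSet ∧ ∃ u v, e = s(u, v) ∧ u ∈ S ∧ v ∈ T}.ncard

/-- Degree of `v` in the induced subgraph `G[S]`, i.e. `|N(v) ∩ S|`. -/
noncomputable def degIn (G : SimpleGraph V) (S : Finset V) (v : V) : ℕ :=
  ((S : Set V) ∩ G.neighborSet v).ncard

/-- `S_{↑v}`: the vertices of `S` with strictly more neighbours in `S` than `v` has. -/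
def upSet (G : SimpleGraph V) (S : Finset V) (v : V) : Set V :=
  {u | u ∈ S ∧ degIn G S v < degIn G S u}

/-- The maximum removal ratio `MRR_G(J, C)` with parameters `ε, ρ, ℓ`. -/
noncomputable def MRR [DecidableEq V] (G : SimpleGraph V) (ε ρ ℓ : ℝ) (J C : Finset V) : ℝ :=
  sSup {x : ℝ | ∃ v ∈ J, x = max
    ((degIn G (insert v C) v : ℝ) /
      max (degIn G J v : ℝ) (ε / (Real.sqrt ℓ * ρ ^ 2) * J.card))
    (((upSet G C v).ncard : ℝ) /
      max (((upSet G C v) ∩ (J : Set V)).ncard : ℝ) (ε / (Real.sqrt ℓ * ρ ^ 2) * J.card))}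

/-- `G` is `ε`-far from having a `ρn` independent set: every set of `ρn` vertices
spans at least `ε n²` edges. -/
def FarFrom (G : SimpleGraph V) [Fintype V] (ρ ε : ℝ) : Prop :=
  ∀ U : Finset V, (U.card : ℝ) = ρ * Fintype.card V →
    ε * (Fintype.card V : ℝ) ^ 2 ≤ (edgesIn G U : ℝ)

lemma sum_degIn_le (G : SimpleGraph V) [Fintype V] (J : Finset V) :
    ∑ v ∈ J, degIn G J v ≤ 2 * edgesIn G J := by
  classical
  let G' : SimpleGraph V :=
    { Adj := fun u w => G.Adj u w ∧ u ∈ J ∧ w ∈ J,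
      symm := ⟨fun u w (h : G.Adj u w ∧ u ∈ J ∧ w ∈ J) => ⟨h.1.symm, h.2.2, h.2.1⟩⟩,
      loopless := ⟨fun u (h : G.Adj u u ∧ u ∈ J ∧ u ∈ J) => G.ne_of_adj h.1 rfl⟩ }
  haveI : DecidableRel G'.Adj := Classical.decRel _
  have hdeg : ∀ v ∈ J, degIn G J v = G'.degree v := by
    intro v hv
    have hset : G'.neighborSet v = (J : Set V) ∩ G.neighborSet v := by
      ext u
      simp only [SimpleGraph.mem_neighborSet, Set.mem_inter_iff, SimpleGraph.mem_neighborSet]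
      show (G.Adj v u ∧ v ∈ J ∧ u ∈ J) ↔ _
      constructor
      · rintro ⟨h, _, hu⟩; exact ⟨hu, h⟩
      · rintro ⟨hu, h⟩; exact ⟨h, hv, hu⟩
    have hdv : G'.degree v = (G'.neighborFinset v).card := rfl
    rw [degIn, ← hset, hdv, ← Set.ncard_coe_finset (G'.neighborFinset v),
      SimpleGraph.neighborFinset_def, Set.coe_toFinset]
  have hedge : edgesIn G J = G'.edgeFinset.card := by
    rw [edgesIn, ← Set.ncard_coe_finset, SimpleGraph.coe_edgeFinset]
    congr 1
    ext e
    induction e with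
    | h u w =>
      simp only [Set.mem_setOf_eq, SimpleGraph.mem_edgeSet, Sym2.mem_iff]
      show (G.Adj u w ∧ ∀ x, x = u ∨ x = w → x ∈ J) ↔ (G.Adj u w ∧ u ∈ J ∧ w ∈ J)
      constructor
      · rintro ⟨h, h2⟩; exact ⟨h, h2 u (Or.inl rfl), h2 w (Or.inr rfl)⟩
      · rintro ⟨h, hu, hw⟩
        exact ⟨h, fun x hx => by rcases hx with rfl | rfl <;> assumption⟩
  calc ∑ v ∈ J, degIn G J v = ∑ v ∈ J, G'.degree v := Finset.sum_congr rfl hdeg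
    _ ≤ ∑ v ∈ Finset.univ, G'.degree v :=
        Finset.sum_le_sum_of_subset (Finset.subset_univ J)
    _ = 2 * G'.edgeFinset.card := G'.sum_degrees_eq_twice_card_edges
    _ = 2 * edgesIn G J := by rw [hedge]

theorem high_degree_vertex_count [Fintype V] [DecidableEq V]
    (G : SimpleGraph V) (ε ρ ℓ r M : ℝ)
    (hε : 0 < ε) (hρ : 0 < ρ) (hℓ : ℓ ≥ 16)
    (J : Finset V) (hJne : J.Nonempty)
    (hJ : (edgesIn G J : ℝ) < ε / (ℓ * ρ ^ 2) * (J.card : ℝ) ^ 2)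
    (D : Finset V) (hr : 0 < r) (hM : 0 < M)
    (hMRR : MRR G ε ρ ℓ J D ≤ r * M / J.card) :
    ∀ d : ℝ, d ≥ ε * r * M / (Real.sqrt ℓ * ρ ^ 2) →
      ({v ∈ (J : Set V) | d < (degIn G D v : ℝ)}.ncard : ℝ) ≤
        2 * ε * r * M * J.card / (d * ℓ * ρ ^ 2) := by
  classical
  intro d hd
  have hℓ0 : (0:ℝ) < ℓ := lt_of_lt_of_le (by norm_num) hℓ
  have hsqrt : 0 < Real.sqrt ℓ := Real.sqrt_pos.mpr hℓ0
  set c : ℝ := ε / (Real.sqrt ℓ * ρ ^ 2) with hc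
  have hc0 : (0:ℝ) < c := div_pos hε (mul_pos hsqrt (pow_pos hρ 2))
  have hJ0 : (0:ℝ) < J.card := by exact_mod_cast Finset.card_pos.mpr hJne
  have hrM : (0:ℝ) < r * M := mul_pos hr hM
  have hd' : c * (r * M) ≤ d := by
    calc c * (r * M) = ε * r * M / (Real.sqrt ℓ * ρ ^ 2) := by rw [hc]; ring
      _ ≤ d := hd
  have hd0 : (0:ℝ) < d := lt_of_lt_of_le (mul_pos hc0 hrM) hd'
  -- the MRR set is bounded above
  set f : V → ℝ := fun v => max
    ((degIn G (insert v D) v : ℝ) /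
      max (degIn G J v : ℝ) (c * J.card))
    (((upSet G D v).ncard : ℝ) /
      max (((upSet G D v) ∩ (J : Set V)).ncard : ℝ) (c * J.card)) with hf
  have hSeq : {x : ℝ | ∃ v ∈ J, x = max
    ((degIn G (insert v D) v : ℝ) /
      max (degIn G J v : ℝ) (ε / (Real.sqrt ℓ * ρ ^ 2) * J.card))
    (((upSet G D v).ncard : ℝ) /
      max (((upSet G D v) ∩ (J : Set V)).ncard : ℝ)
        (ε / (Real.sqrt ℓ * ρ ^ 2) * J.card))} = f '' (J : Set V) := by
    ext x
    simp only [Set.mem_setOf_eq, Set.mem_image, Finset.mem_coe, hf]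
    constructor
    · rintro ⟨v, hv, rfl⟩; exact ⟨v, hv, rfl⟩
    · rintro ⟨v, hv, rfl⟩; exact ⟨v, hv, rfl⟩
  have hBdd : BddAbove (f '' (J : Set V)) :=
    (Set.Finite.image f (J.finite_toSet)).bddAbove
  -- key per-vertex bound
  have key : ∀ v ∈ J, d < (degIn G D v : ℝ) →
      d * J.card / (r * M) < (degIn G J v : ℝ) := by
    intro v hv hdv
    have hmem : f v ∈ f '' (J : Set V) := ⟨v, hv, rfl⟩
    have h1 : f v ≤ r * M / J.card := by
      refine le_trans (le_csSup hBdd hmem) ?_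
      rw [MRR, hSeq] at hMRR
      exact hMRR
    have h2 : (degIn G (insert v D) v : ℝ) /
        max (degIn G J v : ℝ) (c * J.card) ≤ r * M / J.card :=
      le_trans (le_max_left _ _) h1
    have hden : (0:ℝ) < max (degIn G J v : ℝ) (c * J.card) :=
      lt_of_lt_of_le (mul_pos hc0 hJ0) (le_max_right _ _)
    have h3 : (degIn G D v : ℝ) ≤ (degIn G (insert v D) v : ℝ) := by
      have : degIn G D v ≤ degIn G (insert v D) v := by
        apply Set.ncard_le_ncard
        · apply Set.inter_subset_inter_left
          intro x hx
          simp only [Finset.coe_insert, Set.mem_insert_iff]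
          exact Or.inr hx
        · exact Set.toFinite _
      exact_mod_cast this
    have h4 : d < r * M / J.card * max (degIn G J v : ℝ) (c * J.card) := by
      have := (div_le_iff₀ hden).mp h2
      calc d < (degIn G D v : ℝ) := hdv
        _ ≤ (degIn G (insert v D) v : ℝ) := h3
        _ ≤ r * M / J.card * max (degIn G J v : ℝ) (c * J.card) := this
    have hmax : max (degIn G J v : ℝ) (c * J.card) = (degIn G J v : ℝ) := by
      by_contra hne
      have : max (degIn G J v : ℝ) (c * J.card) = c * J.card := by
        rcases max_choice (degIn G J v : ℝ) (c * J.card) with h | h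
        · exact absurd h hne
        · exact h
      rw [this] at h4
      have : r * M / J.card * (c * J.card) = c * (r * M) := by
        field_simp
      rw [this] at h4
      exact absurd hd' (not_le.mpr h4)
    rw [hmax] at h4
    rw [div_lt_iff₀ hrM]
    calc d * J.card = J.card * d := by ring
      _ < J.card * (r * M / J.card * (degIn G J v : ℝ)) := by
          exact mul_lt_mul_of_pos_left h4 hJ0
      _ = (degIn G J v : ℝ) * (r * M) := by field_simp
  -- counting
  set T : Finset V := J.filter (fun v => d < (degIn G D v : ℝ)) with hT
  have hsetT : {v ∈ (J : Set V) | d < (degIn G D v : ℝ)} = (T : Set V) := by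
    ext v
    simp [hT, Finset.mem_filter]
  have hcardT : ({v ∈ (J : Set V) | d < (degIn G D v : ℝ)}.ncard : ℝ) = T.card := by
    rw [hsetT, Set.ncard_coe_finset]
  rw [hcardT]
  have hsum : (T.card : ℝ) * (d * J.card / (r * M)) ≤ ∑ v ∈ T, (degIn G J v : ℝ) := by
    have := Finset.card_nsmul_le_sum T (fun v => (degIn G J v : ℝ))
      (d * J.card / (r * M)) (fun v hv => by
        rw [hT, Finset.mem_filter] at hv
        exact le_of_lt (key v hv.1 hv.2))
    rwa [nsmul_eq_mul] at this
  have hsum2 : ∑ v ∈ T, (degIn G J v : ℝ) ≤ 2 * (edgesIn G J : ℝ) := by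
    have h1 : ∑ v ∈ T, degIn G J v ≤ ∑ v ∈ J, degIn G J v :=
      Finset.sum_le_sum_of_subset (by rw [hT]; exact Finset.filter_subset _ _)
    have h2 : ∑ v ∈ T, degIn G J v ≤ 2 * edgesIn G J := le_trans h1 (sum_degIn_le G J)
    calc ∑ v ∈ T, (degIn G J v : ℝ) = ((∑ v ∈ T, degIn G J v : ℕ) : ℝ) := by push_cast; ring
      _ ≤ ((2 * edgesIn G J : ℕ) : ℝ) := by exact_mod_cast h2
      _ = 2 * (edgesIn G J : ℝ) := by push_cast; ring
  have hchain : (T.card : ℝ) * (d * J.card / (r * M)) <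
      2 * (ε / (ℓ * ρ ^ 2) * (J.card : ℝ) ^ 2) := by
    calc (T.card : ℝ) * (d * J.card / (r * M)) ≤ ∑ v ∈ T, (degIn G J v : ℝ) := hsum
      _ ≤ 2 * (edgesIn G J : ℝ) := hsum2
      _ < 2 * (ε / (ℓ * ρ ^ 2) * (J.card : ℝ) ^ 2) := by linarith
  have hρ2 : (0:ℝ) < ρ ^ 2 := pow_pos hρ 2
  have hℓρ : (0:ℝ) < ℓ * ρ ^ 2 := by positivity
  have h' : ((T.card : ℝ) * d * J.card) / (r * M) <
      (2 * ε * (J.card : ℝ) ^ 2) / (ℓ * ρ ^ 2) := by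
    have e1 : ((T.card : ℝ) * d * J.card) / (r * M)
        = (T.card : ℝ) * (d * J.card / (r * M)) := by ring
    have e2 : (2 * ε * (J.card : ℝ) ^ 2) / (ℓ * ρ ^ 2)
        = 2 * (ε / (ℓ * ρ ^ 2) * (J.card : ℝ) ^ 2) := by ring
    rw [e1, e2]; exact hchain
  have hcleared : (T.card : ℝ) * d * J.card * (ℓ * ρ ^ 2) <
      2 * ε * (J.card : ℝ) ^ 2 * (r * M) := (div_lt_div_iff₀ hrM hℓρ).mp h'
  have hden1 : (0:ℝ) < d * ℓ * ρ ^ 2 := by positivity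
  rw [le_div_iff₀ hden1]
  nlinarith [hJ0, hd0, hcleared]
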